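/- Let Ω ⊂ ℂⁿ be a domain containing the origin and let A_i = Σ_{j=1}^n a_{ij}(z) ∂/∂z_j (i = 1,…,n) be holomorphic vector fields on Ω whose coefficient functions satisfy a_{ij}(0) = δ_{ij} (Kronecker delta). If f ∈ O(Ω) satisfies A_i f ∈ O(Ω)·f for every i (i.e., for each i there is g_i ∈ O(Ω) with Σ_j a_{ij}·∂f/∂z_j = g_i·f on Ω) and f(0) = 0, then f = 0 identically on Ω. -/

import Mathlib

open scoped Manifold

namespace Paper


end Paper

open Paper

section AuxVanishing

open Metric Complex Filter


/-- A one-variable analytic germ dominated by every power is locally zero. -/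
lemma aux_Z1 {h : ℂ → ℂ} (hh : AnalyticAt ℂ h 0)
    (hO : ∀ m : ℕ, ∃ c : ℝ, ∃ ε : ℝ, 0 < ε ∧ ∀ t : ℂ, ‖t‖ ≤ ε → ‖h t‖ ≤ c * ‖t‖ ^ m) :
    ∀ᶠ t in nhds (0:ℂ), h t = 0 := by
  rcases eq_or_ne (analyticOrderAt h 0) ⊤ with ho | ho
  · exact analyticOrderAt_eq_top.1 ho
  · exfalso
    lift analyticOrderAt h 0 to ℕ using ho with N hN
    obtain ⟨g, hg, hg0, hfac⟩ := hh.analyticOrderAt_eq_natCast.1 hN.symm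
    obtain ⟨c, ε, hε, hb⟩ := hO (N + 1)
    have hgc : ContinuousAt g 0 := hg.continuousAt
    have key : ∀ᶠ t in nhdsWithin (0:ℂ) {0}ᶜ, ‖g t‖ ≤ c * ‖t‖ := by
      have h1 : ∀ᶠ t in nhds (0:ℂ), h t = t ^ N • g t ∧ ‖t‖ ≤ ε := by
        filter_upwards [hfac, Metric.eventually_nhds_iff.2 ⟨ε, hε, by
          intro y hy; exact le_of_lt (by simpa [dist_eq_norm] using hy)⟩] with t h1 h2
        exact ⟨by simpa using h1, h2⟩
      filter_upwards [nhdsWithin_le_nhds h1, self_mem_nhdsWithin] with t ⟨h1, h2⟩ ht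
      have htne : (t:ℂ) ≠ 0 := ht
      have hbn := hb t h2
      rw [h1] at hbn
      have hkey : ‖t‖ ^ N * ‖g t‖ ≤ ‖t‖ ^ N * (c * ‖t‖) := by
        rw [smul_eq_mul] at hbn
        calc ‖t‖ ^ N * ‖g t‖ = ‖t ^ N * g t‖ := by rw [norm_mul, norm_pow]
        _ ≤ c * ‖t‖ ^ (N + 1) := hbn
        _ = ‖t‖ ^ N * (c * ‖t‖) := by ring
      have hpow : (0:ℝ) < ‖t‖ ^ N := pow_pos (norm_pos_iff.2 htne) N
      exact le_of_mul_le_mul_left hkey hpow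
    have hlim : Tendsto (fun t : ℂ => ‖g t‖) (nhdsWithin 0 {0}ᶜ) (nhds ‖g 0‖) :=
      (hgc.norm.tendsto).mono_left nhdsWithin_le_nhds
    have hlim2 : Tendsto (fun t : ℂ => c * ‖t‖) (nhdsWithin (0:ℂ) {0}ᶜ) (nhds 0) := by
      have h3 : Tendsto (fun t : ℂ => c * ‖t‖) (nhds 0) (nhds (c * ‖(0:ℂ)‖)) :=
        (continuous_const.mul continuous_norm).tendsto 0
      simpa using h3.mono_left nhdsWithin_le_nhds
    have : ‖g 0‖ ≤ 0 := le_of_tendsto_of_tendsto hlim hlim2 key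
    exact hg0 (norm_le_zero_iff.1 this)

lemma aux_Z2 {h : ℂ → ℂ} {R : ℝ} (hR : 1 < R)
    (hh : DifferentiableOn ℂ h (Metric.ball 0 R))
    (h0 : ∀ᶠ t in nhds (0:ℂ), h t = 0) : h 1 = 0 := by
  have hA : AnalyticOnNhd ℂ h (Metric.ball 0 R) := hh.analyticOnNhd isOpen_ball
  have h0m : (0:ℂ) ∈ Metric.ball (0:ℂ) R := by simp [Metric.mem_ball]; linarith
  have h1m : (1:ℂ) ∈ Metric.ball (0:ℂ) R := by simp [Metric.mem_ball]; simpa using hR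
  exact hA.eqOn_zero_of_preconnected_of_eventuallyEq_zero
    (convex_ball _ _).isPreconnected h0m h0 h1m

lemma aux_L1 {E : Type*} [NormedAddCommGroup E] [NormedSpace ℂ E]
    {f : E → ℂ} {c w u : E} {r : ℝ}
    (hf : DifferentiableOn ℂ f (ball c r)) (hw : ∀ᶠ x in nhds w, f x = 0)
    (hwc : dist w c < r) (hu : dist u w < r - dist w c) : f u = 0 := by
  rcases eq_or_ne u w with rfl | hne
  · exact hw.self_of_nhds
  · have hδ : 0 < dist u w := dist_pos.2 hne
    set R : ℝ := (r - dist w c) / dist u w with hRdef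
    have hR : 1 < R := (one_lt_div hδ).2 hu
    set ℓ : ℂ → E := fun t => w + t • (u - w) with hℓ
    have hmaps : ∀ t : ℂ, ‖t‖ < R → ℓ t ∈ ball c r := by
      intro t ht
      have h1 : dist (ℓ t) c ≤ ‖t • (u - w)‖ + dist w c := by
        calc dist (ℓ t) c ≤ dist (ℓ t) w + dist w c := dist_triangle _ _ _
        _ = ‖t • (u - w)‖ + dist w c := by
            simp [hℓ, dist_eq_norm]
      have h2 : ‖t • (u - w)‖ < r - dist w c := by
        rw [norm_smul]
        have : ‖u - w‖ = dist u w := (dist_eq_norm u w).symm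
        rw [this]
        calc ‖t‖ * dist u w < R * dist u w := by
              exact mul_lt_mul_of_pos_right ht hδ
        _ = r - dist w c := by rw [hRdef, div_mul_cancel₀ _ hδ.ne']
      simp only [mem_ball]
      linarith
    have hdiff : DifferentiableOn ℂ (fun t => f (ℓ t)) (ball 0 R) := by
      apply hf.comp
      · exact Differentiable.differentiableOn (by fun_prop)
      · intro t ht
        exact hmaps t (by simpa [mem_ball_zero_iff] using ht)
    have hcont : Filter.Tendsto ℓ (nhds 0) (nhds w) := by
      have : Continuous ℓ := by fun_prop
      have h0 : ℓ 0 = w := by simp [hℓ]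
      simpa [h0] using this.tendsto 0
    have h0 : ∀ᶠ t in nhds (0:ℂ), f (ℓ t) = 0 := hcont.eventually hw
    have := aux_Z2 hR hdiff h0
    simpa [hℓ] using this

lemma aux_S1 {E : Type*} [NormedAddCommGroup E] [NormedSpace ℂ E]
    {f : E → ℂ} {w v : E} (hd : DifferentiableAt ℂ f w) :
    HasDerivAt (fun t : ℂ => f (w + t • v)) (fderiv ℂ f w v) 0 := by
  have hline : HasDerivAt (fun t : ℂ => w + t • v) v 0 := by
    simpa using ((hasDerivAt_id (0:ℂ)).smul_const v).const_add w
  have hfd : HasFDerivAt f (fderiv ℂ f w) ((fun t : ℂ => w + t • v) 0) := by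
    simpa using hd.hasFDerivAt
  exact hfd.comp_hasDerivAt 0 hline

lemma aux_S2 {E : Type*} [NormedAddCommGroup E] [NormedSpace ℂ E]
    {f : E → ℂ} {Ω : Set E} (hΩ : IsOpen Ω) (hf : DifferentiableOn ℂ f Ω)
    {w v : E} {ρ C : ℝ} (hρ : 0 < ρ)
    (hmem : ∀ t : ℂ, ‖t‖ ≤ ρ → w + t • v ∈ Ω)
    (hC : ∀ t : ℂ, ‖t‖ = ρ → ‖f (w + t • v)‖ ≤ C) :
    ‖fderiv ℂ f w v‖ ≤ C / ρ := by
  set h : ℂ → ℂ := fun t => f (w + t • v) with hh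
  have hmaps : Set.MapsTo (fun t : ℂ => w + t • v) (closedBall 0 ρ) Ω := by
    intro t ht
    exact hmem t (by simpa [Metric.mem_closedBall, dist_eq_norm] using ht)
  have hdiff : DifferentiableOn ℂ h (closedBall 0 ρ) := by
    apply hf.comp _ hmaps
    exact (Differentiable.differentiableOn (by fun_prop))
  have hdc : DiffContOnCl ℂ h (ball 0 ρ) := by
    apply DifferentiableOn.diffContOnCl
    rwa [closure_ball _ hρ.ne']
  have hball : ∀ t ∈ sphere (0:ℂ) ρ, ‖h t‖ ≤ C := by
    intro t ht
    exact hC t (by simpa [mem_sphere_iff_norm] using ht)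
  have h1 := norm_deriv_le_of_forall_mem_sphere_norm_le hρ hdc hball
  have h2 : deriv h 0 = fderiv ℂ f w v := by
    have : DifferentiableAt ℂ f w :=
      hf.differentiableAt (hΩ.mem_nhds (by simpa using hmem 0 (by simp [hρ.le])))
    exact (aux_S1 this).deriv
  rwa [h2] at h1

lemma aux_expand {n : ℕ} (L : (Fin n → ℂ) →L[ℂ] ℂ) (z : Fin n → ℂ) :
    L z = ∑ j, z j * L (Pi.single j 1) := by
  conv_lhs => rw [← Finset.univ_sum_single z]
  rw [map_sum]
  refine Finset.sum_congr rfl fun j _ => ?_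
  have h : Pi.single j (z j) = z j • (Pi.single j (1:ℂ) : Fin n → ℂ) := by
    ext k; by_cases h : k = j <;> simp [Pi.single_apply, h]
  rw [h, map_smul, smul_eq_mul]

lemma aux_induct {n : ℕ} {Ω : Set (Fin n → ℂ)} (hΩopen : IsOpen Ω)
    {f : (Fin n → ℂ) → ℂ} (hf : DifferentiableOn ℂ f Ω) (hf0 : f 0 = 0)
    {a : Fin n → Fin n → (Fin n → ℂ) → ℂ} {g : Fin n → (Fin n → ℂ) → ℂ}
    {K G ε₀ : ℝ} (hK : 0 ≤ K) (hG : 0 ≤ G) (hε₀ : 0 < ε₀)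
    (hsub : ∀ z : Fin n → ℂ, ‖z‖ ≤ ε₀ → z ∈ Ω)
    (hKb : ∀ z : Fin n → ℂ, ‖z‖ ≤ ε₀ → ∀ i j, ‖a i j z - (if i = j then (1:ℂ) else 0)‖ ≤ K * ‖z‖)
    (hGb : ∀ z : Fin n → ℂ, ‖z‖ ≤ ε₀ → ∀ i, ‖g i z‖ ≤ G)
    (heq : ∀ i, ∀ z ∈ Ω, (∑ j, a i j z * fderiv ℂ f z (Pi.single j 1)) = g i z * f z) :
    ∀ m : ℕ, ∃ ε c : ℝ, 0 < ε ∧ ε ≤ ε₀ ∧ 0 ≤ c ∧ ∀ z : Fin n → ℂ, ‖z‖ ≤ ε → ‖f z‖ ≤ c * ‖z‖ ^ m := by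
  intro m
  induction m with
  | zero =>
    obtain ⟨C, hC⟩ := (isCompact_closedBall (0 : Fin n → ℂ) ε₀).exists_bound_of_continuousOn
      (hf.continuousOn.mono fun z hz => hsub z (by simpa [mem_closedBall_zero_iff] using hz))
    exact ⟨ε₀, max C 0, hε₀, le_rfl, le_max_right _ _, fun z hz => by
      rw [pow_zero, mul_one]; exact (hC z (by simpa [mem_closedBall_zero_iff] using hz)).trans (le_max_left _ _)⟩
  | succ m ih =>
    obtain ⟨ε, c, hε, hεle, hc, hb⟩ := ih
    -- Cauchy estimate for the partial derivatives
    have hD : ∀ (w : Fin n → ℂ) (j : Fin n), ‖w‖ ≤ ε / 2 → w ≠ 0 →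
        ‖fderiv ℂ f w (Pi.single j 1)‖ ≤ c * 2 ^ m * ‖w‖ ^ m / ‖w‖ := by
      intro w j hw hw0
      have hwpos : 0 < ‖w‖ := norm_pos_iff.2 hw0
      have hnorm : ∀ t : ℂ, ‖t‖ ≤ ‖w‖ → ‖w + t • (Pi.single j 1 : Fin n → ℂ)‖ ≤ 2 * ‖w‖ := by
        intro t ht
        calc ‖w + t • (Pi.single j 1 : Fin n → ℂ)‖ ≤ ‖w‖ + ‖t • (Pi.single j 1 : Fin n → ℂ)‖ := norm_add_le _ _
        _ = ‖w‖ + ‖t‖ := by rw [norm_smul, Pi.norm_single, norm_one, mul_one]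
        _ ≤ 2 * ‖w‖ := by linarith
      refine aux_S2 (v := (Pi.single j 1 : Fin n → ℂ)) (C := c * 2 ^ m * ‖w‖ ^ m)
        hΩopen hf hwpos ?_ ?_
      · intro t ht
        apply hsub
        calc ‖w + t • (Pi.single j 1 : Fin n → ℂ)‖ ≤ 2 * ‖w‖ := hnorm t ht
        _ ≤ ε := by linarith
        _ ≤ ε₀ := hεle
      · intro t ht
        calc ‖f (w + t • (Pi.single j 1 : Fin n → ℂ))‖ ≤ c * ‖w + t • (Pi.single j 1 : Fin n → ℂ)‖ ^ m :=
              hb _ ((hnorm t ht.le).trans (by linarith))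
        _ ≤ c * (2 * ‖w‖) ^ m := by
            gcongr
            exact hnorm t ht.le
        _ = c * 2 ^ m * ‖w‖ ^ m := by rw [mul_pow]; ring
    -- improved estimate using the hypothesis
    have hD2 : ∀ (w : Fin n → ℂ) (i : Fin n), ‖w‖ ≤ ε / 2 → w ≠ 0 →
        ‖fderiv ℂ f w (Pi.single i 1)‖ ≤ (n * K * (c * 2 ^ m) + G * c) * ‖w‖ ^ m := by
      intro w i hw hw0
      have hwpos : 0 < ‖w‖ := norm_pos_iff.2 hw0
      have hwΩ : w ∈ Ω := hsub w (by linarith [hεle, hε])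
      have hwε₀ : ‖w‖ ≤ ε₀ := by linarith [hεle, hε]
      have hsplit : ∑ j, (a i j w - if i = j then (1:ℂ) else 0) * fderiv ℂ f w (Pi.single j 1)
          = (∑ j, a i j w * fderiv ℂ f w (Pi.single j 1)) - fderiv ℂ f w (Pi.single i 1) := by
        simp [sub_mul, Finset.sum_sub_distrib, ite_mul, Finset.sum_ite_eq, Finset.mem_univ]
      have hrep : fderiv ℂ f w (Pi.single i 1) = g i w * f w -
          ∑ j, (a i j w - if i = j then (1:ℂ) else 0) * fderiv ℂ f w (Pi.single j 1) := by
        rw [hsplit, heq i w hwΩ]; ring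
      have hterm : ∀ j : Fin n,
          ‖(a i j w - if i = j then (1:ℂ) else 0) * fderiv ℂ f w (Pi.single j 1)‖
            ≤ K * (c * 2 ^ m) * ‖w‖ ^ m := by
        intro j
        rw [norm_mul]
        calc ‖a i j w - if i = j then (1:ℂ) else 0‖ * ‖fderiv ℂ f w (Pi.single j 1)‖
            ≤ (K * ‖w‖) * (c * 2 ^ m * ‖w‖ ^ m / ‖w‖) := by
              apply mul_le_mul (hKb w hwε₀ i j) (hD w j hw hw0) (norm_nonneg _) (by positivity)
        _ = K * (c * 2 ^ m) * ‖w‖ ^ m := by field_simp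
      rw [hrep]
      calc ‖g i w * f w - ∑ j, (a i j w - if i = j then (1:ℂ) else 0) *
              fderiv ℂ f w (Pi.single j 1)‖
          ≤ ‖g i w * f w‖ + ‖∑ j, (a i j w - if i = j then (1:ℂ) else 0) *
              fderiv ℂ f w (Pi.single j 1)‖ := norm_sub_le _ _
      _ ≤ G * (c * ‖w‖ ^ m) + ∑ j : Fin n, K * (c * 2 ^ m) * ‖w‖ ^ m := by
          gcongr
          · rw [norm_mul]
            exact mul_le_mul (hGb w hwε₀ i) (hb w (by linarith)) (norm_nonneg _) hG
          · exact (norm_sum_le _ _).trans (Finset.sum_le_sum fun j _ => hterm j)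
      _ = (n * K * (c * 2 ^ m) + G * c) * ‖w‖ ^ m := by
          rw [Finset.sum_const, Finset.card_univ, Fintype.card_fin, nsmul_eq_mul]
          ring
    -- mean value theorem step
    refine ⟨ε / 2, n * (n * K * (c * 2 ^ m) + G * c), by linarith, by linarith, by positivity,
      fun z hz => ?_⟩
    rcases eq_or_ne z 0 with rfl | hz0
    · simp [hf0, zero_pow (Nat.succ_ne_zero m)]
    · set c1 : ℝ := n * K * (c * 2 ^ m) + G * c with hc1
      have hc1pos : 0 ≤ c1 := by positivity
      set C : ℝ := n * c1 * ‖z‖ ^ (m + 1) with hC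
      have hCpos : 0 ≤ C := by positivity
      have hzpos : 0 < ‖z‖ := norm_pos_iff.2 hz0
      have key : ∀ σ : ℝ, σ ∈ Set.Ioo (0:ℝ) 1 → ‖f z - f (σ • z)‖ ≤ C := by
        intro σ hσ
        have hder : ∀ t ∈ Set.Icc σ 1, HasDerivWithinAt (fun t : ℝ => f (t • z))
            (fderiv ℂ f (t • z) z) (Set.Icc σ 1) t := by
          intro t ht
          have htpos : 0 < t := lt_of_lt_of_le hσ.1 ht.1
          have htz : ‖t • z‖ ≤ ε / 2 := by
            rw [norm_smul, Real.norm_eq_abs, _root_.abs_of_pos htpos]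
            calc t * ‖z‖ ≤ 1 * ‖z‖ := by gcongr; exact ht.2
            _ = ‖z‖ := one_mul _
            _ ≤ ε / 2 := hz
          have hmem : t • z ∈ Ω := hsub _ (by linarith [hεle, hε])
          have hfd : HasFDerivAt f (fderiv ℂ f (t • z)) (t • z) :=
            (hf.differentiableAt (hΩopen.mem_nhds hmem)).hasFDerivAt
          have hid : HasDerivAt (fun t : ℝ => t • z) z t := by
            simpa using (hasDerivAt_id t).smul_const z
          have hcomp := (hfd.restrictScalars ℝ).comp_hasDerivAt t hid
          have h3 : HasDerivAt (fun t : ℝ => f (t • z)) (fderiv ℂ f (t • z) z) t := by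
            exact hcomp
          exact h3.hasDerivWithinAt
        have hbd : ∀ t ∈ Set.Icc σ 1, ‖fderiv ℂ f (t • z) z‖ ≤ C := by
          intro t ht
          have htpos : 0 < t := lt_of_lt_of_le hσ.1 ht.1
          have htzn : ‖t • z‖ ≤ ‖z‖ := by
            rw [norm_smul, Real.norm_eq_abs, _root_.abs_of_pos htpos]
            calc t * ‖z‖ ≤ 1 * ‖z‖ := by gcongr; exact ht.2
            _ = ‖z‖ := one_mul _
          have htz : ‖t • z‖ ≤ ε / 2 := htzn.trans hz
          have htz0 : t • z ≠ 0 := smul_ne_zero htpos.ne' hz0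
          rw [aux_expand]
          calc ‖∑ j, z j * fderiv ℂ f (t • z) (Pi.single j 1)‖
              ≤ ∑ j, ‖z j * fderiv ℂ f (t • z) (Pi.single j 1)‖ := norm_sum_le _ _
          _ ≤ ∑ j : Fin n, ‖z‖ * (c1 * ‖z‖ ^ m) := by
              apply Finset.sum_le_sum
              intro j _
              rw [norm_mul]
              apply mul_le_mul (norm_le_pi_norm z j)
              · calc ‖fderiv ℂ f (t • z) (Pi.single j 1)‖ ≤ c1 * ‖t • z‖ ^ m :=
                    hD2 (t • z) j htz htz0
                _ ≤ c1 * ‖z‖ ^ m := by gcongr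
              · exact norm_nonneg _
              · exact norm_nonneg _
          _ = C := by
              rw [Finset.sum_const, Finset.card_univ, Fintype.card_fin, nsmul_eq_mul, hC]
              ring
        have := Convex.norm_image_sub_le_of_norm_hasDerivWithin_le hder hbd (convex_Icc σ 1)
          (Set.mem_Icc.2 ⟨le_rfl, hσ.2.le⟩) (Set.mem_Icc.2 ⟨hσ.2.le, le_rfl⟩)
        calc ‖f z - f (σ • z)‖ = ‖f ((1:ℝ) • z) - f (σ • z)‖ := by rw [one_smul]
        _ ≤ C * ‖(1:ℝ) - σ‖ := this
        _ ≤ C * 1 := by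
            apply mul_le_mul_of_nonneg_left _ hCpos
            rw [Real.norm_eq_abs, _root_.abs_of_nonneg (by linarith [hσ.2])]
            linarith [hσ.1]
        _ = C := mul_one _
      -- take the limit σ → 0⁺
      have hcont : ContinuousAt f 0 :=
        (hf.differentiableAt (hΩopen.mem_nhds (hsub 0 (by simp [hε₀.le])))).continuousAt
      have htd : Tendsto (fun σ : ℝ => ‖f z - f (σ • z)‖) (nhdsWithin 0 (Set.Ioi 0))
          (nhds ‖f z - f 0‖) := by
        have h1 : Tendsto (fun σ : ℝ => σ • z) (nhds 0) (nhds 0) := by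
          have := (continuous_id.smul (continuous_const (y := z))).tendsto (0:ℝ)
          convert this using 2
          · rfl
          · exact (zero_smul ℝ z).symm
        have h3 : Tendsto (fun σ : ℝ => f (σ • z)) (nhds (0:ℝ)) (nhds (f 0)) :=
          hcont.tendsto.comp h1
        exact (tendsto_const_nhds.sub h3).norm.mono_left nhdsWithin_le_nhds
      have hev : ∀ᶠ σ in nhdsWithin (0:ℝ) (Set.Ioi 0), ‖f z - f (σ • z)‖ ≤ C := by
        filter_upwards [Ioo_mem_nhdsGT_of_mem (Set.mem_Ico.2 ⟨le_rfl, one_pos⟩)] with σ hσ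
        exact key σ hσ
      have hfin : ‖f z - f 0‖ ≤ C := le_of_tendsto htd hev
      rw [hf0, sub_zero] at hfin
      calc ‖f z‖ ≤ C := hfin
      _ = n * c1 * ‖z‖ ^ (m + 1) := rfl

end AuxVanishing

/-- **Lemma 4.1** ([AH], Lemma 2). Let `Ω ⊂ ℂⁿ` be a domain containing the origin and let
`A_i = ∑_j a_{ij}(z) ∂/∂z_j`, `i = 1, …, n`, be holomorphic vector fields on `Ω` with
`a_{ij}(0) = δ_{ij}`. If `f ∈ 𝒪(Ω)` satisfies `A_i f ∈ 𝒪(Ω)·f` for every `i` and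
`f(0) = 0`, then `f = 0` identically on `Ω`. -/
theorem vanishing_of_holomorphic_eigenfunction
    {n : ℕ}
    -- `Ω` is a domain in `ℂⁿ` containing the origin
    (Ω : Set (Fin n → ℂ)) (hΩopen : IsOpen Ω) (hΩconn : IsConnected Ω)
    (h0 : (0 : Fin n → ℂ) ∈ Ω)
    -- the coefficients of the holomorphic vector fields `A_i`
    (a : Fin n → Fin n → (Fin n → ℂ) → ℂ)
    (ha : ∀ i j, DifferentiableOn ℂ (a i j) Ω)
    (ha0 : ∀ i j, a i j 0 = if i = j then (1 : ℂ) else 0)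
    -- `f` is holomorphic on `Ω`
    (f : (Fin n → ℂ) → ℂ) (hf : DifferentiableOn ℂ f Ω)
    -- `A_i f ∈ 𝒪(Ω)·f` for every `i`
    (hAf : ∀ i, ∃ g : (Fin n → ℂ) → ℂ, DifferentiableOn ℂ g Ω ∧
      ∀ z ∈ Ω, (∑ j, a i j z * fderiv ℂ f z (Pi.single j 1)) = g z * f z)
    -- `f` vanishes at the origin
    (hf0 : f 0 = 0) :
    ∀ z ∈ Ω, f z = 0 := by
  classical
  open Metric Complex Filter in
  -- choose the holomorphic multipliers `g i`
  choose g hgdiff hgeq using hAf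
  -- a closed ball around the origin inside `Ω`
  obtain ⟨ε₁, hε₁, hball⟩ := Metric.isOpen_iff.1 hΩopen 0 h0
  have hsub0 : ∀ z : Fin n → ℂ, ‖z‖ ≤ ε₁ / 2 → z ∈ Ω := by
    intro z hz
    exact hball (by rw [mem_ball_zero_iff]; linarith)
  -- a linear bound on `a i j z - δ_{ij}` near the origin
  have hOa : ∀ p : Fin n × Fin n, ∃ Kp : ℝ, 0 ≤ Kp ∧
      ∀ᶠ z in nhds (0 : Fin n → ℂ),
        ‖a p.1 p.2 z - (if p.1 = p.2 then (1:ℂ) else 0)‖ ≤ Kp * ‖z‖ := by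
    rintro ⟨i, j⟩
    have hd : DifferentiableAt ℂ (a i j) 0 := (ha i j).differentiableAt (hΩopen.mem_nhds h0)
    obtain ⟨Kp, hKp, hKw⟩ := hd.isBigO_sub.exists_pos
    refine ⟨Kp, hKp.le, ?_⟩
    filter_upwards [hKw.bound] with zz hzz
    simpa [ha0 i j, sub_zero] using hzz
  choose Kp hKp hKev using hOa
  set K : ℝ := ∑ p : Fin n × Fin n, Kp p with hKdef
  have hK : 0 ≤ K := Finset.sum_nonneg fun p _ => hKp p
  have hKall : ∀ᶠ z in nhds (0 : Fin n → ℂ), ∀ p : Fin n × Fin n,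
      ‖a p.1 p.2 z - (if p.1 = p.2 then (1:ℂ) else 0)‖ ≤ K * ‖z‖ := by
    rw [eventually_all]
    intro p
    filter_upwards [hKev p] with z hz
    refine hz.trans (mul_le_mul_of_nonneg_right ?_ (norm_nonneg _))
    exact Finset.single_le_sum (fun q _ => hKp q) (Finset.mem_univ p)
  -- a uniform bound on the `g i` near the origin
  set G : ℝ := ∑ i : Fin n, (‖g i 0‖ + 1) with hGdef
  have hG : 0 ≤ G := Finset.sum_nonneg fun i _ => by positivity
  have hGall : ∀ᶠ z in nhds (0 : Fin n → ℂ), ∀ i : Fin n, ‖g i z‖ ≤ G := by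
    rw [eventually_all]
    intro i
    have hgc : ContinuousAt (g i) 0 :=
      ((hgdiff i).differentiableAt (hΩopen.mem_nhds h0)).continuousAt
    have hev : ∀ᶠ z in nhds (0 : Fin n → ℂ), ‖g i z‖ < ‖g i 0‖ + 1 :=
      hgc.norm.tendsto.eventually_lt_const (by linarith)
    filter_upwards [hev] with z hz
    refine hz.le.trans (Finset.single_le_sum (f := fun i => ‖g i 0‖ + 1)
      (fun q _ => by positivity) (Finset.mem_univ i))
  -- extract a single radius on which everything holds
  obtain ⟨ε₃, hε₃, hprop⟩ := Metric.eventually_nhds_iff.1 (hKall.and hGall)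
  set ε₀ : ℝ := min (ε₁ / 2) (ε₃ / 2) with hε₀def
  have hε₀ : 0 < ε₀ := lt_min (by linarith) (by linarith)
  have hsub : ∀ z : Fin n → ℂ, ‖z‖ ≤ ε₀ → z ∈ Ω := fun z hz =>
    hsub0 z (hz.trans (min_le_left _ _))
  have hprop' : ∀ z : Fin n → ℂ, ‖z‖ ≤ ε₀ →
      (∀ p : Fin n × Fin n, ‖a p.1 p.2 z - (if p.1 = p.2 then (1:ℂ) else 0)‖ ≤ K * ‖z‖)
        ∧ ∀ i, ‖g i z‖ ≤ G := by
    intro z hz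
    refine hprop ?_
    rw [dist_zero_right]
    calc ‖z‖ ≤ ε₀ := hz
    _ ≤ ε₃ / 2 := min_le_right _ _
    _ < ε₃ := by linarith
  have hKb : ∀ z : Fin n → ℂ, ‖z‖ ≤ ε₀ → ∀ i j,
      ‖a i j z - (if i = j then (1:ℂ) else 0)‖ ≤ K * ‖z‖ :=
    fun z hz i j => (hprop' z hz).1 (i, j)
  have hGb : ∀ z : Fin n → ℂ, ‖z‖ ≤ ε₀ → ∀ i, ‖g i z‖ ≤ G :=
    fun z hz => (hprop' z hz).2
  -- the main inductive estimate
  have hind := aux_induct hΩopen hf hf0 hK hG hε₀ hsub hKb hGb hgeq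
  -- `f` vanishes on the ball of radius `ε₀`
  have hloc : ∀ z : Fin n → ℂ, ‖z‖ < ε₀ → f z = 0 := by
    intro z hz
    rcases eq_or_ne z 0 with rfl | hz0
    · exact hf0
    · have hzpos : 0 < ‖z‖ := norm_pos_iff.2 hz0
      set R : ℝ := ε₀ / ‖z‖ with hRdef
      have hR : 1 < R := (one_lt_div hzpos).2 hz
      have hmaps : ∀ t : ℂ, ‖t‖ < R → (t • z) ∈ Ω := by
        intro t ht
        apply hsub
        rw [norm_smul]
        calc ‖t‖ * ‖z‖ ≤ R * ‖z‖ := mul_le_mul_of_nonneg_right ht.le (norm_nonneg _)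
        _ = ε₀ := div_mul_cancel₀ _ hzpos.ne'
      have hdiff : DifferentiableOn ℂ (fun t : ℂ => f (t • z)) (ball 0 R) := by
        apply hf.comp
        · exact Differentiable.differentiableOn (by fun_prop)
        · intro t ht
          exact hmaps t (by simpa [mem_ball_zero_iff] using ht)
      have hanal : AnalyticAt ℂ (fun t : ℂ => f (t • z)) 0 :=
        hdiff.analyticOnNhd isOpen_ball 0 (by simp [mem_ball_zero_iff]; linarith)
      have hO : ∀ m : ℕ, ∃ c' ε' : ℝ, 0 < ε' ∧
          ∀ t : ℂ, ‖t‖ ≤ ε' → ‖f (t • z)‖ ≤ c' * ‖t‖ ^ m := by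
        intro m
        obtain ⟨ε', c', hε', hεle', hc', hbo⟩ := hind m
        refine ⟨c' * ‖z‖ ^ m, ε' / ‖z‖, by positivity, fun t ht => ?_⟩
        have htz : ‖t • z‖ ≤ ε' := by
          rw [norm_smul]
          calc ‖t‖ * ‖z‖ ≤ ε' / ‖z‖ * ‖z‖ := by gcongr
          _ = ε' := div_mul_cancel₀ _ hzpos.ne'
        calc ‖f (t • z)‖ ≤ c' * ‖t • z‖ ^ m := hbo _ htz
        _ = c' * ‖z‖ ^ m * ‖t‖ ^ m := by rw [norm_smul, mul_pow]; ring
      have h0 := aux_Z1 hanal hO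
      have h1 := aux_Z2 hR hdiff h0
      simpa using h1
  -- globalize via connectedness
  set U : Set (Fin n → ℂ) := {x | ∀ᶠ y in nhds x, f y = 0} with hUdef
  have hUopen : IsOpen U := isOpen_setOf_eventually_nhds
  have hseed : (0 : Fin n → ℂ) ∈ U := by
    have hball' : ∀ᶠ y in nhds (0 : Fin n → ℂ), y ∈ ball (0 : Fin n → ℂ) ε₀ :=
      isOpen_ball.eventually_mem (mem_ball_self hε₀)
    filter_upwards [hball'] with y hy
    exact hloc y (by rwa [mem_ball_zero_iff] at hy)
  have hclosed : closure U ∩ Ω ⊆ U := by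
    rintro x ⟨hxcl, hxΩ⟩
    obtain ⟨r, hr, hball2⟩ := Metric.isOpen_iff.1 hΩopen x hxΩ
    obtain ⟨w, hwU, hwd⟩ := Metric.mem_closure_iff.1 hxcl (r / 2) (by positivity)
    have hfd : DifferentiableOn ℂ f (ball x r) := hf.mono hball2
    have hwx : dist w x < r / 2 := by rwa [dist_comm]
    have hzero : ∀ u : Fin n → ℂ, dist u w < r / 2 → f u = 0 := by
      intro u hu
      exact aux_L1 hfd hwU (by linarith) (by linarith)
    have hxball : x ∈ ball w (r / 2) := by rwa [mem_ball]
    have : ∀ᶠ y in nhds x, y ∈ ball w (r / 2) := isOpen_ball.eventually_mem hxball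
    filter_upwards [this] with y hy
    exact hzero y (by rwa [mem_ball] at hy)
  have hΩU : Ω ⊆ U :=
    hΩconn.isPreconnected.subset_of_closure_inter_subset hUopen ⟨0, h0, hseed⟩ hclosed
  intro z hz
  exact (hΩU hz).self_of_nhds
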